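/- Let d ≥ 1, m₁, m₂ ≥ 0 and U ≥ 1 be integers. Let A₁ be an m₁ × d matrix, A₂ an m₂ × d matrix, b₁ ∈ ℝ^{m₁}, b₂ ∈ ℝ^{m₂}, all with integer entries bounded by U in absolute value. Let η₂ ∈ ℝ^{m₂} satisfy 0 ≤ (η₂)_j ≤ 1/(2(d+1)·((d+1)U)^(d+1)) for every j. If the system A₁x ≤ b₁, A₂x = b₂ + η₂, x ≥ 0 has a solution x ∈ ℝ^d, then the system A₁x ≤ b₁, A₂x = b₂, x ≥ 0 also has a solution. (Lemma 36 of Kaplan–Mansour–Moran–Stemmer–Tur: sufficiently small nonnegative perturbations of the right-hand sides of equality constraints do not affect feasibility of an integer-data LP.) -/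

import Mathlib

/-- Conic Carathéodory: a nonnegative combination can be rewritten with support on a
linearly independent subfamily. -/
lemma cara_aux {ι : Type*} [Fintype ι] [DecidableEq ι] {E : Type*} [AddCommGroup E] [Module ℝ E]
    (c : ι → E) :
    ∀ (n : ℕ) (s : Finset ι), s.card ≤ n → ∀ (y : ι → ℝ), (∀ i, 0 ≤ y i) → (∀ i ∉ s, y i = 0) →
      ∃ (t : Finset ι) (y' : ι → ℝ), t ⊆ s ∧ (∀ i, 0 ≤ y' i) ∧ (∀ i ∉ t, y' i = 0) ∧
        (∑ i, y' i • c i = ∑ i, y i • c i) ∧ LinearIndependent ℝ (fun i : t => c (i : ι)) := by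
  intro n
  induction n with
  | zero =>
    intro s hs y hy0 hys
    have hse : s = ∅ := Finset.card_eq_zero.mp (Nat.le_zero.mp hs)
    subst hse
    exact ⟨∅, y, subset_rfl, hy0, hys, rfl, linearIndependent_empty_type⟩
  | succ n ih =>
    intro s hs y hy0 hys
    by_cases hli : LinearIndependent ℝ (fun i : s => c (i : ι))
    · exact ⟨s, y, subset_rfl, hy0, hys, rfl, hli⟩
    · obtain ⟨gf, hgsum, i₀, hi₀⟩ := Fintype.not_linearIndependent_iff.mp hli
      set σ : ℝ := if 0 < gf i₀ then 1 else -1 with hσ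
      set z : ι → ℝ := fun i => if h : i ∈ s then σ * gf ⟨i, h⟩ else 0 with hz
      have hzi₀ : 0 < z (i₀ : ι) := by
        have h' : z (i₀ : ι) = σ * gf i₀ := by simp [hz, i₀.2]
        rw [h', hσ]
        rcases lt_trichotomy (gf i₀) 0 with h | h | h
        · simp only [not_lt.mpr h.le, if_false]; nlinarith
        · exact absurd h hi₀
        · rw [if_pos h]; linarith
      have hzsum : ∑ i, z i • c i = 0 := by
        have h1 : ∑ i, z i • c i = ∑ i ∈ s, z i • c i := by
          apply (Finset.sum_subset (Finset.subset_univ s) _).symm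
          intro i _ hi
          simp [hz, hi]
        have h2 : ∑ i ∈ s, z i • c i = σ • ∑ i : s, gf i • c (i : ι) := by
          rw [Finset.smul_sum, ← Finset.sum_attach s (fun i => z i • c i)]
          refine Finset.sum_congr rfl (fun i _ => ?_)
          simp [hz, i.2, mul_smul]
        rw [h1, h2, hgsum, smul_zero]
      set P : Finset ι := s.filter (fun i => 0 < z i) with hP
      have hi₀P : (i₀ : ι) ∈ P := by
        rw [hP, Finset.mem_filter]; exact ⟨i₀.2, hzi₀⟩
      obtain ⟨istar, histarP, hmin⟩ := P.exists_min_image (fun i => y i / z i) ⟨_, hi₀P⟩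
      have histars : istar ∈ s := (Finset.mem_filter.mp histarP).1
      have hzistar : 0 < z istar := (Finset.mem_filter.mp histarP).2
      set τ : ℝ := y istar / z istar with hτdef
      have hτ : 0 ≤ τ := div_nonneg (hy0 _) hzistar.le
      set y'' : ι → ℝ := fun i => y i - τ * z i with hy''
      have hy''0 : ∀ i, 0 ≤ y'' i := by
        intro i
        by_cases hiP : i ∈ P
        · have h1 : τ ≤ y i / z i := hmin i hiP
          have h2 : 0 < z i := (Finset.mem_filter.mp hiP).2
          have h3 := (le_div_iff₀ h2).mp h1
          simp only [hy'']
          linarith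
        · have hzle : z i ≤ 0 := by
            by_cases his : i ∈ s
            · by_contra h
              exact hiP (Finset.mem_filter.mpr ⟨his, by linarith⟩)
            · simp [hz, his]
          have h4 : τ * z i ≤ 0 := mul_nonpos_of_nonneg_of_nonpos hτ hzle
          have h5 := hy0 i
          simp only [hy'']
          linarith
      have hy''zero : ∀ i ∉ s.erase istar, y'' i = 0 := by
        intro i hi
        rw [Finset.mem_erase] at hi
        push_neg at hi
        by_cases hii : i = istar
        · subst hii
          simp only [hy'', hτdef]
          field_simp
          ring
        · have his : i ∉ s := hi hii
          simp [hy'', hys i his, hz, his]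
      have hsum : ∑ i, y'' i • c i = ∑ i, y i • c i := by
        have hexp : ∀ i : ι, y'' i • c i = y i • c i - (τ * z i) • c i := by
          intro i; rw [hy'']; exact sub_smul _ _ _
        rw [Finset.sum_congr rfl (fun i _ => hexp i), Finset.sum_sub_distrib]
        have h6 : ∑ i, (τ * z i) • c i = τ • ∑ i, z i • c i := by
          rw [Finset.smul_sum]
          exact Finset.sum_congr rfl fun i _ => mul_smul _ _ _
        rw [h6, hzsum, smul_zero, sub_zero]
      have hcard : (s.erase istar).card ≤ n := by
        have := Finset.card_erase_of_mem histars
        omega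
      obtain ⟨t, y', ht, h1, h2, h3, h4⟩ := ih (s.erase istar) hcard y'' hy''0 hy''zero
      exact ⟨t, y', ht.trans (Finset.erase_subset _ _), h1, h2, h3.trans hsum, h4⟩

/-- A finitely generated convex cone is closed. -/
lemma cone_isClosed {ι : Type*} [Fintype ι] [DecidableEq ι] {W : Type*} [NormedAddCommGroup W]
    [NormedSpace ℝ W] [FiniteDimensional ℝ W] (g : ι → W) :
    IsClosed {x : W | ∃ y : ι → ℝ, (∀ i, 0 ≤ y i) ∧ x = ∑ i, y i • g i} := by
  have key : {x : W | ∃ y : ι → ℝ, (∀ i, 0 ≤ y i) ∧ x = ∑ i, y i • g i} =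
      ⋃ t : {t : Finset ι // LinearIndependent ℝ (fun i : {x // x ∈ t} => g (i : ι))},
        (fun y : {x // x ∈ t.1} → ℝ => ∑ i, y i • g (i : ι)) '' {y | ∀ i, 0 ≤ y i} := by
    ext x
    constructor
    · rintro ⟨y, hy0, rfl⟩
      obtain ⟨t, y', ht, h1, h2, h3, h4⟩ :=
        cara_aux g (Finset.univ.card) Finset.univ le_rfl y hy0 (by simp)
      refine Set.mem_iUnion.mpr ⟨⟨t, h4⟩, ⟨fun i => y' i, fun i => h1 _, ?_⟩⟩
      rw [← h3]
      have h5 : ∑ i, y' i • g i = ∑ i ∈ t, y' i • g i := by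
        apply (Finset.sum_subset (Finset.subset_univ t) _).symm
        intro i _ hi
        rw [h2 i hi, zero_smul]
      rw [h5, ← Finset.sum_coe_sort t (fun i => y' i • g i)]
    · intro hx
      obtain ⟨t, y, hy0, rfl⟩ := Set.mem_iUnion.mp hx
      refine ⟨fun i => if h : i ∈ t.1 then y ⟨i, h⟩ else 0, fun i => ?_, ?_⟩
      · by_cases h : i ∈ t.1 <;> simp [h] ; exact hy0 _
      · have h5 : ∑ i : ι, (if h : i ∈ t.1 then y ⟨i, h⟩ else 0) • g i
            = ∑ i ∈ t.1, (if h : i ∈ t.1 then y ⟨i, h⟩ else 0) • g i := by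
          apply (Finset.sum_subset (Finset.subset_univ t.1) _).symm
          intro i _ hi
          simp [hi]
        rw [h5, ← Finset.sum_coe_sort t.1
          (fun i => (if h : i ∈ t.1 then y ⟨i, h⟩ else 0) • g i)]
        exact (Finset.sum_congr rfl fun i _ => by simp [i.2]).symm
  rw [key]
  apply isClosed_iUnion_of_finite
  rintro ⟨t, ht⟩
  set L : ({x // x ∈ t} → ℝ) →ₗ[ℝ] W :=
    { toFun := fun y => ∑ i, y i • g (i : ι)
      map_add' := by intro a b; simp [add_smul, Finset.sum_add_distrib]
      map_smul' := by intro m a; simp [mul_smul, Finset.smul_sum] } with hL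
  have hinj : Function.Injective L := by
    rw [← LinearMap.ker_eq_bot, LinearMap.ker_eq_bot']
    intro m hm
    have h7 := Fintype.linearIndependent_iff.mp ht m hm
    funext i
    exact h7 i
  have hce := L.isClosedEmbedding_of_injective (LinearMap.ker_eq_bot.mpr hinj)
  have horth : IsClosed {y : {x // x ∈ t} → ℝ | ∀ i, 0 ≤ y i} := by
    have h8 : {y : {x // x ∈ t} → ℝ | ∀ i, 0 ≤ y i} = ⋂ i, {y | 0 ≤ y i} := by
      ext; simp [Set.mem_iInter]
    rw [h8]
    exact isClosed_iInter fun i => isClosed_le continuous_const (continuous_apply i)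
  have h9 : (fun y : {x // x ∈ t} → ℝ => ∑ i, y i • g (i : ι)) = ⇑L := rfl
  rw [h9]
  exact hce.isClosedMap _ horth

open scoped InnerProductSpace

/-- Farkas alternative: either `e` is a nonnegative combination of the `g i`, or there is a
separating vector `w`. -/
lemma farkas_alt {ι : Type*} [Fintype ι] [DecidableEq ι] {k : Type*} [Fintype k] [DecidableEq k]
    (g : ι → (k → ℝ)) (e : k → ℝ) :
    (∃ y : ι → ℝ, (∀ i, 0 ≤ y i) ∧ ∑ i, y i • g i = e) ∨
    (∃ w : k → ℝ, (∀ i, 0 ≤ ∑ r, g i r * w r) ∧ ∑ r, e r * w r < 0) := by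
  classical
  set C : Set (k → ℝ) := {x | ∃ y : ι → ℝ, (∀ i, 0 ≤ y i) ∧ x = ∑ i, y i • g i} with hC
  by_cases he : e ∈ C
  · obtain ⟨y, hy, hsum⟩ := he
    exact Or.inl ⟨y, hy, hsum.symm⟩
  · right
    set V := EuclideanSpace ℝ k with hV
    set ψ : (k → ℝ) ≃L[ℝ] V := (PiLp.continuousLinearEquiv 2 ℝ (fun _ : k => ℝ)).symm with hψ
    set Ccone : ConvexCone ℝ (k → ℝ) :=
      { carrier := C
        smul_mem' := by
          rintro r hr x ⟨y, hy, rfl⟩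
          exact ⟨fun i => r * y i, fun i => mul_nonneg hr.le (hy i),
            by rw [Finset.smul_sum]; exact Finset.sum_congr rfl fun i _ => (mul_smul _ _ _).symm⟩
        add_mem' := by
          rintro x ⟨y, hy, rfl⟩ x' ⟨y', hy', rfl⟩
          exact ⟨fun i => y i + y' i, fun i => add_nonneg (hy i) (hy' i),
            by rw [← Finset.sum_add_distrib]
               exact Finset.sum_congr rfl fun i _ => (add_smul _ _ _).symm⟩ } with hCcone
    set K : ConvexCone ℝ V := Ccone.map (ψ : (k → ℝ) →ₗ[ℝ] V) with hK
    have hKset : (K : Set V) = ⇑ψ '' C := rfl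
    have hzeroC : (0 : k → ℝ) ∈ C := ⟨fun _ => 0, fun _ => le_rfl, by simp⟩
    have hne : (K : Set V).Nonempty := ⟨ψ 0, ⟨0, hzeroC, rfl⟩⟩
    have hclosed : IsClosed (K : Set V) := by
      rw [hKset]
      exact (ψ.toHomeomorph.isClosedMap) _ (cone_isClosed g)
    have hdisj : ψ e ∉ K := by
      rintro ⟨x, hxC, hxe⟩
      exact he (by rwa [← ψ.injective hxe])
    obtain ⟨w, hw1, hw2⟩ :=
      ProperCone.hyperplane_separation' (⟨K.toPointedCone
        (ConvexCone.Pointed.of_nonempty_of_isClosed hne hclosed), hclosed⟩ : ProperCone ℝ V) hdisj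
    rw [real_inner_comm] at hw2
    have hinner : ∀ u : k → ℝ, ⟪ψ u, w⟫_ℝ = ∑ r, u r * w r := by
      intro u
      rw [PiLp.inner_apply]
      refine Finset.sum_congr rfl fun r _ => ?_
      have hur : ψ u r = u r := rfl
      simp [hur, mul_comm]
    refine ⟨fun r => w r, fun i => ?_, ?_⟩
    · have hgiC : g i ∈ C := by
        refine ⟨fun i' => if i' = i then 1 else 0, fun i' => by positivity, ?_⟩
        rw [Finset.sum_eq_single i (fun b _ hb => by simp [hb]) (by simp)]
        simp
      have := hw1 (ψ (g i)) ⟨g i, hgiC, rfl⟩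
      rwa [hinner] at this
    · have : ⟪w, ψ e⟫_ℝ = ∑ r, e r * w r := by
        rw [real_inner_comm]; exact hinner e
      rwa [this] at hw2

lemma sum_opt {α M : Type*} [Fintype α] [AddCommMonoid M] (f : Option α → M) :
    ∑ o : Option α, f o = f none + ∑ a, f (some a) := by
  rw [univ_option, Finset.sum_insertNone]

set_option maxHeartbeats 1000000 in
/-- Quantitative LP perturbation lemma. -/
lemma key_lemma (d U : ℕ) (hU : 1 ≤ U) {ι : Type*} [Fintype ι] [DecidableEq ι]
    (B : Matrix ι (Fin d) ℝ) (v v' : ι → ℝ)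
    (hB : ∀ i j, ∃ z : ℤ, B i j = (z : ℝ) ∧ |z| ≤ (U : ℤ))
    (hv' : ∀ i, ∃ z : ℤ, v' i = (z : ℝ) ∧ |z| ≤ (U : ℤ))
    (hδ : ∀ i, |v i - v' i| ≤ 1 / (2 * ((d : ℝ) + 1) * (((d : ℝ) + 1) * U) ^ (d + 1)))
    (hfeas : ∃ x : Fin d → ℝ, ∀ i, B.mulVec x i ≤ v i) :
    ∃ x : Fin d → ℝ, ∀ i, B.mulVec x i ≤ v' i := by
  classical
  by_contra hinf
  push_neg at hinf
  obtain ⟨xh, hxh⟩ := hfeas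
  set k := Option (Fin d) with hk
  set g : Option ι → (k → ℝ) := fun io => Option.elim io
      (fun r => Option.elim r 1 (fun _ => 0))
      (fun i => fun r => Option.elim r (v' i) (fun j => B i j)) with hg
  set e : k → ℝ := fun r => Option.elim r (-1) (fun _ => 0) with he
  -- Step A : Farkas
  rcases farkas_alt g e with ⟨y0, hy00, hysum⟩ | ⟨w, hw1, hw2⟩
  swap
  · -- separating vector gives a feasible point for the unperturbed system: contradiction
    have hwnone : 0 < w none := by
      rw [sum_opt] at hw2
      simp only [he] at hw2
      simp at hw2
      linarith
    set x : Fin d → ℝ := fun j => - w (some j) / w none with hx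
    obtain ⟨i, hi⟩ := hinf x
    have h0 := hw1 (some i)
    rw [sum_opt] at h0
    simp only [hg, Option.elim] at h0
    -- h0 : 0 ≤ v' i * w none + ∑ j, B i j * w (some j)
    have hmv : B.mulVec x i = (∑ j, B i j * (- w (some j))) / w none := by
      simp only [Matrix.mulVec, dotProduct, hx]
      rw [Finset.sum_div]
      exact Finset.sum_congr rfl fun j _ => (mul_div_assoc _ _ _).symm
    rw [hmv, lt_div_iff₀ hwnone] at hi
    have hsn : ∑ j, B i j * (- w (some j)) = - ∑ j, B i j * w (some j) := by
      rw [← Finset.sum_neg_distrib]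
      exact Finset.sum_congr rfl fun j _ => by ring
    rw [hsn] at hi
    linarith
  · -- Step B : Carathéodory
    obtain ⟨t, y, htsub, hy, hyz, hsum', hli⟩ :=
      cara_aux g Finset.univ.card Finset.univ le_rfl y0 hy00 (by simp)
    have hsum : ∑ io, y io • g io = e := hsum'.trans hysum
    have hginj : Function.Injective (fun i : {x // x ∈ t} => g (i : Option ι)) := hli.injective
    -- Step C : extend the support vectors to a basis consisting of integer vectors
    set S : Set (k → ℝ) := Set.range (fun i : {x // x ∈ t} => g (i : Option ι)) with hS
    have hSli : LinearIndepOn ℝ id S := (linearIndepOn_id_range_iff hli.injective).mpr hli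
    set T : Set (k → ℝ) := S ∪ Set.range (fun r : k => (Pi.single r 1 : k → ℝ)) with hT
    have hTspan : ⊤ ≤ Submodule.span ℝ T := by
      have h2 : ⇑(Pi.basisFun ℝ k) = fun r : k => (Pi.single r 1 : k → ℝ) :=
        funext fun r => Pi.basisFun_apply ℝ k r
      have h1 : Submodule.span ℝ (Set.range fun r : k => (Pi.single r 1 : k → ℝ)) = ⊤ := by
        rw [← h2]; exact (Pi.basisFun ℝ k).span_eq
      rw [← h1]
      exact Submodule.span_mono Set.subset_union_right
    set bs : Set (k → ℝ) := hSli.extend Set.subset_union_left with hbsdef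
    set bb : Module.Basis bs ℝ (k → ℝ) := Module.Basis.extendLe hSli Set.subset_union_left hTspan with hbb
    have hbbco : ⇑bb = ((↑) : bs → (k → ℝ)) := Module.Basis.coe_extendLe _ _ _
    have hSbs : S ⊆ bs := hSli.subset_extend _
    have hbsT : bs ⊆ T := hSli.extend_subset _
    haveI : Fintype bs := FiniteDimensional.fintypeBasisIndex bb
    have hcardbs : Fintype.card bs = d + 1 := by
      have h1 := Module.finrank_eq_card_basis bb
      have h2 : Module.finrank ℝ (k → ℝ) = d + 1 := by
        rw [Module.finrank_pi]
        simp [hk]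
      omega
    have hcardk : Fintype.card k = d + 1 := by simp [hk]
    set ρ : bs ≃ k := Fintype.equivOfCardEq (hcardbs.trans hcardk.symm) with hρ
    -- integer entries of basis vectors
    have hint : ∀ u : bs, ∀ r : k, ∃ zz : ℤ, (u : k → ℝ) r = (zz : ℝ) ∧ |zz| ≤ (U : ℤ) := by
      rintro ⟨u, hu⟩ r
      simp only []
      rcases hbsT hu with hus | hustd
      · obtain ⟨i, hi⟩ := hus
        have hi' : g (i : Option ι) = u := hi
        rcases io : (i : Option ι) with _ | i'
        · rw [io] at hi'
          rcases r with _ | j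
          · exact ⟨1, by simp [← hi', hg], by simpa using hU⟩
          · exact ⟨0, by simp [← hi', hg], by simp⟩
        · rw [io] at hi'
          rcases r with _ | j
          · obtain ⟨zz, h1, h2⟩ := hv' i'
            exact ⟨zz, by simp only [← hi', hg]; simpa using h1, h2⟩
          · obtain ⟨zz, h1, h2⟩ := hB i' j
            exact ⟨zz, by simp only [← hi', hg]; simpa using h1, h2⟩
      · obtain ⟨r', hr'⟩ := hustd
        by_cases hrr : r = r'
        · exact ⟨1, by simp [← hr', Pi.single_apply, hrr], by simpa using hU⟩
        · exact ⟨0, by simp [← hr', Pi.single_apply, hrr], by simp⟩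
    -- coefficient vector of `e` in the basis
    have hgmem : ∀ i ∈ t, g i ∈ bs := fun i hi => hSbs ⟨⟨i, hi⟩, rfl⟩
    set z : bs → ℝ := fun nn => ∑ i ∈ t, (if g i = (nn : k → ℝ) then y i else 0) with hzdef
    have hz0 : ∀ nn, 0 ≤ z nn := fun nn => Finset.sum_nonneg fun i _ => by
      by_cases h : g i = (nn : k → ℝ) <;> simp [h, hy i]
    have hzphi : ∀ i (hi : i ∈ t), z ⟨g i, hgmem i hi⟩ = y i := by
      intro i hi
      rw [hzdef]
      simp only []
      rw [Finset.sum_eq_single i]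
      · simp
      · intro i' hi' hne
        have hgg : g i' ≠ g i := by
          intro hgg
          have h3 : (⟨i', hi'⟩ : {x // x ∈ t}) = ⟨i, hi⟩ := hginj hgg
          exact hne (congrArg Subtype.val h3)
        simp [hgg]
      · intro h; exact absurd hi h
    have hzsum : ∑ nn : bs, z nn • (nn : k → ℝ) = e := by
      rw [hzdef]
      simp only []
      calc ∑ nn : bs, (∑ i ∈ t, if g i = (nn : k → ℝ) then y i else 0) • (nn : k → ℝ)
          = ∑ nn : bs, ∑ i ∈ t, (if g i = (nn : k → ℝ) then y i • (nn : k → ℝ) else 0) := by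
            refine Finset.sum_congr rfl fun nn _ => ?_
            rw [Finset.sum_smul]
            exact Finset.sum_congr rfl fun i _ => by split <;> simp
        _ = ∑ i ∈ t, ∑ nn : bs, (if g i = (nn : k → ℝ) then y i • (nn : k → ℝ) else 0) :=
            Finset.sum_comm
        _ = ∑ i ∈ t, y i • g i := by
            refine Finset.sum_congr rfl fun i hi => ?_
            have huniq : ∀ nn : bs, (if g i = (nn : k → ℝ) then y i • (nn : k → ℝ) else 0)
                = if nn = (⟨g i, hgmem i hi⟩ : bs) then y i • g i else 0 := by
              intro nn
              by_cases h : g i = (nn : k → ℝ)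
              · rw [if_pos h, if_pos (Subtype.ext h.symm)]
                rw [← h]
              · rw [if_neg h, if_neg]
                intro hc
                exact h (by rw [hc])
            rw [Finset.sum_congr rfl fun nn _ => huniq nn]
            exact (Fintype.sum_eq_single _ (fun nn hnn => if_neg hnn)).trans (if_pos rfl)
        _ = ∑ io, y io • g io :=
            Finset.sum_subset (Finset.subset_univ t)
              (fun io _ hio => by rw [hyz io hio, zero_smul])
        _ = e := hsum
    -- transport to the concrete index type `k`
    set q : k → (k → ℝ) := fun r => ((ρ.symm r : bs) : k → ℝ) with hq
    set z2 : k → ℝ := fun r => z (ρ.symm r) with hz2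
    have hz20 : ∀ r, 0 ≤ z2 r := fun r => hz0 _
    have hzsum2 : ∑ r : k, z2 r • q r = e := by
      calc ∑ r : k, z2 r • q r
          = ∑ nn : bs, z nn • ((nn : k → ℝ)) :=
            Equiv.sum_comp ρ.symm (fun nn : bs => z nn • ((nn : k → ℝ)))
        _ = e := hzsum
    have hqint : ∀ r r' : k, ∃ zz : ℤ, q r r' = (zz : ℝ) ∧ |zz| ≤ (U : ℤ) := fun r r' =>
      hint (ρ.symm r) r'
    have hqli : LinearIndependent ℝ q := by
      have hbli : LinearIndependent ℝ (fun nn : bs => (nn : k → ℝ)) := by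
        have h2 := bb.linearIndependent
        rwa [hbbco] at h2
      exact hbli.comp ρ.symm ρ.symm.injective
    -- the square matrix
    set M : Matrix k k ℝ := Matrix.of fun jj nn => q nn jj with hM
    have hMmul : M.mulVec z2 = e := by
      funext jj
      have h1 := congrFun hzsum2 jj
      rw [Finset.sum_apply] at h1
      simp only [Pi.smul_apply, smul_eq_mul] at h1
      rw [← h1]
      simp only [Matrix.mulVec, dotProduct, hM, Matrix.of_apply]
      exact Finset.sum_congr rfl fun nn _ => mul_comm _ _
    have hdet : M.det ≠ 0 := by
      intro h0
      obtain ⟨vv, hvv0, hvvm⟩ := Matrix.exists_mulVec_eq_zero_iff.mpr h0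
      have hlin : ∑ r : k, vv r • q r = 0 := by
        funext r'
        have h1 := congrFun hvvm r'
        simp only [Matrix.mulVec, dotProduct, hM, Matrix.of_apply, Pi.zero_apply] at h1
        rw [Finset.sum_apply]
        simp only [Pi.smul_apply, smul_eq_mul, Pi.zero_apply]
        rw [← h1]
        exact Finset.sum_congr rfl fun nn _ => mul_comm _ _
      have h3 := Fintype.linearIndependent_iff.mp hqli vv hlin
      exact hvv0 (funext h3)
    -- integer bounds via Cramer's rule
    choose Mz hMz1 hMz2 using hqint
    set Mzm : Matrix k k ℤ := Matrix.of fun jj nn => Mz nn jj with hMzm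
    have hMcast : M = Mzm.map (Int.cast : ℤ → ℝ) := by
      ext jj nn
      simp [hM, hMzm, hMz1 nn jj]
    have hdetz : ((Mzm.det : ℤ) : ℝ) = M.det := by
      rw [hMcast]
      simpa using (RingHom.map_det (Int.castRingHom ℝ) Mzm)
    have hdetz0 : Mzm.det ≠ 0 := by
      intro h
      apply hdet
      rw [← hdetz, h, Int.cast_zero]
    have hdetge1 : (1 : ℝ) ≤ |M.det| := by
      have h1 : (1 : ℤ) ≤ |Mzm.det| := Int.one_le_abs hdetz0
      rw [← hdetz, ← Int.cast_abs]
      exact_mod_cast h1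
    set K : ℝ := ((d + 1).factorial : ℝ) * (U : ℝ) ^ (d + 1) with hK
    have hcram : ∀ r : k, M.det * z2 r = (M.updateCol r e).det := by
      intro r
      have h1 : Matrix.cramer M (M.mulVec z2) = M.det • z2 := by
        rw [Matrix.cramer_eq_adjugate_mulVec, Matrix.mulVec_mulVec, Matrix.adjugate_mul,
          Matrix.smul_mulVec, Matrix.one_mulVec]
      have h2 := congrFun h1 r
      rw [hMmul, Matrix.cramer_apply] at h2
      simpa [mul_comm] using h2.symm
    have hez : ∀ r : k, ∃ zz : ℤ, e r = (zz : ℝ) ∧ |zz| ≤ (U : ℤ) := by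
      intro r
      rcases r with _ | j
      · refine ⟨-1, by simp [he], ?_⟩
        simp only [abs_neg, abs_one]
        exact_mod_cast hU
      · exact ⟨0, by simp [he], by simp⟩
    choose ez hez1 hez2 using hez
    have hupdet : ∀ r : k, |(M.updateCol r e).det| ≤ K := by
      intro r
      set Nz : Matrix k k ℤ := Mzm.updateCol r ez with hNz
      have hcast : M.updateCol r e = Nz.map (Int.cast : ℤ → ℝ) := by
        ext jj nn
        by_cases h : nn = r
        · subst h
          simp [Matrix.updateCol_apply, hNz, hez1]
        · simp [Matrix.updateCol_apply, h, hNz, hMz1 nn jj, hM, hMzm]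
      have hNabs : |Nz.det| ≤ ((d + 1).factorial : ℤ) * (U : ℤ) ^ (d + 1) := by
        have hb : ∀ i j, AbsoluteValue.abs (Nz i j) ≤ (U : ℤ) := by
          intro i j
          simp only [hNz, Matrix.updateCol_apply, AbsoluteValue.abs_apply]
          split
          · exact hez2 _
          · exact hMz2 j i
        have h4 := Matrix.det_le hb
        simpa [hcardk, nsmul_eq_mul] using h4
      have hcdet : |(M.updateCol r e).det| = ((|Nz.det| : ℤ) : ℝ) := by
        rw [hcast]
        rw [show ((Nz.map (Int.cast : ℤ → ℝ)).det) = ((Nz.det : ℤ) : ℝ) by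
          simpa using (RingHom.map_det (Int.castRingHom ℝ) Nz).symm]
        rw [Int.cast_abs]
      rw [hcdet, hK]
      exact_mod_cast hNabs
    have hzK : ∀ r : k, z2 r ≤ K := by
      intro r
      have h3 : |M.det| * z2 r ≤ K := by
        calc |M.det| * z2 r = |M.det * z2 r| := by
              rw [abs_mul, abs_of_nonneg (hz20 r)]
          _ = |(M.updateCol r e).det| := by rw [hcram r]
          _ ≤ K := hupdet r
      nlinarith [hz20 r, hdetge1, h3, abs_nonneg M.det]
    have hyK : ∀ i ∈ t, y i ≤ K := by
      intro i hi
      have h1 : y i = z2 (ρ ⟨g i, hgmem i hi⟩) := by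
        rw [hz2]
        simp only [Equiv.symm_apply_apply]
        exact (hzphi i hi).symm
      rw [h1]
      exact hzK _
    -- extract the certificate identities
    have hA : ∀ j : Fin d, ∑ i : ι, y (some i) * B i j = 0 := by
      intro j
      have h1 := congrFun hsum (some j)
      rw [Finset.sum_apply] at h1
      rw [sum_opt] at h1
      simpa [hg, he] using h1
    have hV : ∑ i : ι, y (some i) * v' i = -1 - y none := by
      have h1 := congrFun hsum none
      rw [Finset.sum_apply] at h1
      rw [sum_opt] at h1
      simp only [Pi.smul_apply, smul_eq_mul, hg, he, Option.elim] at h1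
      linarith
    set ε : ℝ := 1 / (2 * ((d : ℝ) + 1) * (((d : ℝ) + 1) * U) ^ (d + 1)) with hεdef
    have hU' : (1 : ℝ) ≤ (U : ℝ) := by exact_mod_cast hU
    have hεpos : 0 < ε := by
      rw [hεdef]
      have h1 : (0:ℝ) < ((d : ℝ) + 1) * U := by positivity
      positivity
    set t' : Finset ι := Finset.univ.filter (fun i : ι => some i ∈ t) with ht'
    have hcardt' : (t'.card : ℝ) ≤ (d : ℝ) + 1 := by
      have h1 : t'.card ≤ (bs.toFinset).card := by
        apply Finset.card_le_card_of_injOn (fun i => g (some i))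
        · intro i hi
          rw [Finset.mem_coe, Set.mem_toFinset]
          exact hgmem _ ((Finset.mem_filter.mp hi).2)
        · intro i1 hh1 i2 hh2 hgg
          have h5 := hginj (a₁ := ⟨some i1, (Finset.mem_filter.mp hh1).2⟩)
            (a₂ := ⟨some i2, (Finset.mem_filter.mp hh2).2⟩) hgg
          simpa using congrArg Subtype.val h5
      have h2 : (bs.toFinset).card = d + 1 := by rw [Set.toFinset_card]; exact hcardbs
      have h3 := h1.trans h2.le
      exact_mod_cast h3
    have hKnonneg : (0:ℝ) ≤ K := by rw [hK]; positivity
    have hKε : ((d : ℝ) + 1) * K * ε ≤ 1 / 2 := by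
      have hfact : ((d + 1).factorial : ℝ) ≤ ((d : ℝ) + 1) ^ (d + 1) := by
        have h1 := Nat.factorial_le_pow (d + 1)
        have h2 : (((d+1) ^ (d+1) : ℕ) : ℝ) = ((d : ℝ) + 1) ^ (d + 1) := by push_cast; ring
        rw [← h2]
        exact_mod_cast h1
      have hD2 : (0:ℝ) < 2 * ((d : ℝ) + 1) * (((d : ℝ) + 1) * U) ^ (d + 1) := by
        have h1 : (0:ℝ) < ((d : ℝ) + 1) * U := by positivity
        positivity
      have hA1 : ((d : ℝ) + 1) * K ≤ ((d : ℝ) + 1) * (((d : ℝ) + 1) * U) ^ (d + 1) := by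
        rw [hK, mul_pow]
        have h1 : ((d + 1).factorial : ℝ) * (U : ℝ) ^ (d + 1)
            ≤ ((d : ℝ) + 1) ^ (d + 1) * (U : ℝ) ^ (d + 1) :=
          mul_le_mul_of_nonneg_right hfact (by positivity)
        nlinarith [h1]
      calc ((d : ℝ) + 1) * K * ε
          = (((d : ℝ) + 1) * K) / (2 * ((d : ℝ) + 1) * (((d : ℝ) + 1) * U) ^ (d + 1)) := by
            rw [hεdef, mul_one_div]
        _ ≤ (((d : ℝ) + 1) * (((d : ℝ) + 1) * U) ^ (d + 1))
            / (2 * ((d : ℝ) + 1) * (((d : ℝ) + 1) * U) ^ (d + 1)) := by gcongr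
        _ = 1 / 2 := by
            field_simp
    -- final contradiction
    have hterm : ∀ i : ι, 0 ≤ y (some i) * (v i - B.mulVec xh i) := fun i =>
      mul_nonneg (hy _) (by linarith [hxh i])
    have hsplit : ∑ i : ι, y (some i) * (v i - B.mulVec xh i)
        = (∑ i : ι, y (some i) * v' i) + (∑ i : ι, y (some i) * (v i - v' i))
          - ∑ i : ι, y (some i) * B.mulVec xh i := by
      rw [← Finset.sum_add_distrib, ← Finset.sum_sub_distrib]
      exact Finset.sum_congr rfl fun i _ => by ring
    have hBx : ∑ i : ι, y (some i) * B.mulVec xh i = 0 := by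
      calc ∑ i : ι, y (some i) * B.mulVec xh i
          = ∑ i : ι, ∑ j, y (some i) * (B i j * xh j) := by
            refine Finset.sum_congr rfl fun i _ => ?_
            rw [Matrix.mulVec, dotProduct, Finset.mul_sum]
        _ = ∑ j, ∑ i : ι, y (some i) * (B i j * xh j) := Finset.sum_comm
        _ = ∑ j, (∑ i : ι, y (some i) * B i j) * xh j := by
            refine Finset.sum_congr rfl fun j _ => ?_
            rw [Finset.sum_mul]
            exact Finset.sum_congr rfl fun i _ => by ring
        _ = 0 := Finset.sum_eq_zero fun j _ => by rw [hA j, zero_mul]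
    have hδsum : ∑ i : ι, y (some i) * (v i - v' i) ≤ 1 / 2 := by
      have h1 : ∀ i : ι, y (some i) * (v i - v' i) ≤ (if i ∈ t' then K * ε else 0) := by
        intro i
        by_cases hit : i ∈ t'
        · rw [if_pos hit]
          have hyi : y (some i) ≤ K := hyK _ (Finset.mem_filter.mp hit).2
          have h2 : v i - v' i ≤ ε := le_trans (le_abs_self _) (hδ i)
          calc y (some i) * (v i - v' i) ≤ y (some i) * ε :=
                mul_le_mul_of_nonneg_left h2 (hy _)
            _ ≤ K * ε := mul_le_mul_of_nonneg_right hyi hεpos.le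
        · rw [if_neg hit]
          have h3 : y (some i) = 0 := by
            apply hyz
            intro hmem
            exact hit (Finset.mem_filter.mpr ⟨Finset.mem_univ _, hmem⟩)
          rw [h3, zero_mul]
      calc ∑ i : ι, y (some i) * (v i - v' i)
          ≤ ∑ i : ι, (if i ∈ t' then K * ε else 0) := Finset.sum_le_sum fun i _ => h1 i
        _ = t'.card * (K * ε) := by
            rw [Finset.sum_ite_mem, Finset.univ_inter, Finset.sum_const, nsmul_eq_mul]
        _ ≤ ((d : ℝ) + 1) * (K * ε) :=
            mul_le_mul_of_nonneg_right hcardt' (by positivity)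
        _ ≤ 1 / 2 := by rw [← mul_assoc]; exact hKε
    have h2 : 0 ≤ ∑ i : ι, y (some i) * (v i - B.mulVec xh i) :=
      Finset.sum_nonneg fun i _ => hterm i
    rw [hsplit, hBx, hV] at h2
    have h6 := hy none
    linarith

/-- Lemma 36 of Kaplan–Mansour–Moran–Stemmer–Tur: sufficiently small nonnegative
perturbations of the right-hand sides of the equality constraints do not affect the
feasibility of an LP with integer data bounded by `U`. -/
theorem stmt_13 (d m₁ m₂ U : ℕ) (hd : 1 ≤ d) (hU : 1 ≤ U)
    (A₁ : Matrix (Fin m₁) (Fin d) ℝ) (A₂ : Matrix (Fin m₂) (Fin d) ℝ)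
    (b₁ : Fin m₁ → ℝ) (b₂ : Fin m₂ → ℝ)
    (hA₁ : ∀ i j, ∃ z : ℤ, A₁ i j = (z : ℝ) ∧ |z| ≤ (U : ℤ))
    (hA₂ : ∀ i j, ∃ z : ℤ, A₂ i j = (z : ℝ) ∧ |z| ≤ (U : ℤ))
    (hb₁ : ∀ i, ∃ z : ℤ, b₁ i = (z : ℝ) ∧ |z| ≤ (U : ℤ))
    (hb₂ : ∀ i, ∃ z : ℤ, b₂ i = (z : ℝ) ∧ |z| ≤ (U : ℤ))
    (η₂ : Fin m₂ → ℝ)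
    (hη : ∀ j, 0 ≤ η₂ j ∧
      η₂ j ≤ 1 / (2 * ((d : ℝ) + 1) * (((d : ℝ) + 1) * U) ^ (d + 1)))
    (hfeas : ∃ x : Fin d → ℝ, (∀ j, 0 ≤ x j) ∧ (∀ i, A₁.mulVec x i ≤ b₁ i) ∧
      ∀ i, A₂.mulVec x i = b₂ i + η₂ i) :
    ∃ x : Fin d → ℝ, (∀ j, 0 ≤ x j) ∧ (∀ i, A₁.mulVec x i ≤ b₁ i) ∧
      ∀ i, A₂.mulVec x i = b₂ i := by
  classical
  set ι : Type := Fin m₁ ⊕ Fin m₂ ⊕ Fin m₂ ⊕ Fin d with hι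
  set B : Matrix ι (Fin d) ℝ := Matrix.of (fun i j => Sum.elim (fun a => A₁ a j)
    (Sum.elim (fun a => A₂ a j) (Sum.elim (fun a => -A₂ a j)
      (fun a => if a = j then (-1 : ℝ) else 0))) i) with hBdef
  set v' : ι → ℝ := Sum.elim b₁ (Sum.elim b₂ (Sum.elim (fun a => -b₂ a) (fun _ => 0))) with hv'def
  set v : ι → ℝ := Sum.elim b₁ (Sum.elim (fun a => b₂ a + η₂ a)
    (Sum.elim (fun a => -(b₂ a + η₂ a)) (fun _ => 0))) with hvdef
  have hUr : (1 : ℝ) ≤ (U : ℝ) := by exact_mod_cast hU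
  have hεnn : 0 ≤ 1 / (2 * ((d : ℝ) + 1) * (((d : ℝ) + 1) * U) ^ (d + 1)) := by
    have h1 : (0:ℝ) < ((d : ℝ) + 1) * U := by positivity
    positivity
  have hmv : ∀ (x : Fin d → ℝ) (i : ι), B.mulVec x i = Sum.elim (fun a => A₁.mulVec x a)
      (Sum.elim (fun a => A₂.mulVec x a) (Sum.elim (fun a => -(A₂.mulVec x a))
        (fun a => -x a))) i := by
    intro x i
    rcases i with a | a | a | a
    · simp [hBdef, Matrix.mulVec, dotProduct]
    · simp [hBdef, Matrix.mulVec, dotProduct]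
    · simp [hBdef, Matrix.mulVec, dotProduct, neg_mul, Finset.sum_neg_distrib]
    · simp only [hBdef, Matrix.mulVec, dotProduct, Matrix.of_apply, Sum.elim_inr]
      rw [Finset.sum_congr rfl (fun j _ => show (if a = j then (-1:ℝ) else 0) * x j
        = if a = j then -x j else 0 by split <;> simp)]
      simp
  have hB : ∀ (i : ι) j, ∃ z : ℤ, B i j = (z : ℝ) ∧ |z| ≤ (U : ℤ) := by
    intro i j
    rcases i with a | a | a | a
    · obtain ⟨z, h1, h2⟩ := hA₁ a j
      exact ⟨z, by simpa [hBdef] using h1, h2⟩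
    · obtain ⟨z, h1, h2⟩ := hA₂ a j
      exact ⟨z, by simpa [hBdef] using h1, h2⟩
    · obtain ⟨z, h1, h2⟩ := hA₂ a j
      exact ⟨-z, by simp [hBdef, h1], by simpa using h2⟩
    · by_cases h : a = j
      · exact ⟨-1, by simp [hBdef, h], by simpa using hU⟩
      · exact ⟨0, by simp [hBdef, h], by simp⟩
  have hv' : ∀ i : ι, ∃ z : ℤ, v' i = (z : ℝ) ∧ |z| ≤ (U : ℤ) := by
    intro i
    rcases i with a | a | a | a
    · obtain ⟨z, h1, h2⟩ := hb₁ a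
      exact ⟨z, by simpa [hv'def] using h1, h2⟩
    · obtain ⟨z, h1, h2⟩ := hb₂ a
      exact ⟨z, by simpa [hv'def] using h1, h2⟩
    · obtain ⟨z, h1, h2⟩ := hb₂ a
      exact ⟨-z, by simp [hv'def, h1], by simpa using h2⟩
    · exact ⟨0, by simp [hv'def], by simp⟩
  have hδ : ∀ i : ι, |v i - v' i|
      ≤ 1 / (2 * ((d : ℝ) + 1) * (((d : ℝ) + 1) * U) ^ (d + 1)) := by
    intro i
    rcases i with a | a | a | a
    · simpa [hvdef, hv'def] using hεnn
    · have := (hη a).1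
      have := (hη a).2
      rw [hvdef, hv'def]
      simp only [Sum.elim_inl, Sum.elim_inr]
      rw [show b₂ a + η₂ a - b₂ a = η₂ a by ring, abs_of_nonneg (hη a).1]
      exact (hη a).2
    · rw [hvdef, hv'def]
      simp only [Sum.elim_inl, Sum.elim_inr]
      rw [show -(b₂ a + η₂ a) - -b₂ a = -η₂ a by ring, abs_neg, abs_of_nonneg (hη a).1]
      exact (hη a).2
    · simpa [hvdef, hv'def] using hεnn
  have hfeas' : ∃ x : Fin d → ℝ, ∀ i : ι, B.mulVec x i ≤ v i := by
    obtain ⟨x, hx0, hx1, hx2⟩ := hfeas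
    refine ⟨x, fun i => ?_⟩
    rw [hmv]
    rcases i with a | a | a | a
    · simpa [hvdef] using hx1 a
    · simp only [Sum.elim_inl, Sum.elim_inr, hvdef]
      exact (hx2 a).le
    · simp only [Sum.elim_inl, Sum.elim_inr, hvdef]
      exact neg_le_neg (hx2 a).ge
    · simp only [Sum.elim_inl, Sum.elim_inr, hvdef]
      exact neg_nonpos_of_nonneg (hx0 a)
  obtain ⟨x, hx⟩ := key_lemma d U hU B v v' hB hv' hδ hfeas'
  refine ⟨x, fun j => ?_, fun i => ?_, fun i => ?_⟩
  · have h1 := hx (Sum.inr (Sum.inr (Sum.inr j)))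
    rw [hmv] at h1
    simp only [Sum.elim_inr, hv'def] at h1
    linarith
  · have h1 := hx (Sum.inl i)
    rw [hmv] at h1
    simpa [hv'def] using h1
  · have h1 := hx (Sum.inr (Sum.inl i))
    rw [hmv] at h1
    simp only [Sum.elim_inl, Sum.elim_inr, hv'def] at h1
    have h2 := hx (Sum.inr (Sum.inr (Sum.inl i)))
    rw [hmv] at h2
    simp only [Sum.elim_inl, Sum.elim_inr, hv'def] at h2
    have h3 : b₂ i ≤ A₂.mulVec x i := by linarith
    linarith
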